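/- For every finite group G there exists a finite partially ordered set P with exactly 4·|G| elements whose automorphism group Aut(P) (the group of order isomorphisms P ≃ P) is isomorphic to G. -/

import Mathlib

namespace AutPoset4

variable {G : Type*} [Group G]

/-- A generating sequence for `G`. -/
structure GenSeq (G : Type*) [Group G] where
  t : ℕ
  s : ℕ → G
  notMem : ∀ j < t, s j ∉ Subgroup.closure (s '' {i | i < j})
  gen : Subgroup.closure (s '' {i | i < t}) = ⊤

namespace GenSeq

/-- The chain of subgroups. -/
def H (gs : GenSeq G) (j : ℕ) : Subgroup G := Subgroup.closure (gs.s '' {i | i < j})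

/-- Prefix products. -/
def p (gs : GenSeq G) : ℕ → G
  | 0 => 1
  | (j + 1) => gs.p j * gs.s j

variable (gs : GenSeq G)

theorem H_mono {j k : ℕ} (h : j ≤ k) : gs.H j ≤ gs.H k :=
  Subgroup.closure_mono (Set.image_mono fun _ hi => lt_of_lt_of_le hi h)

theorem s_mem_H {j k : ℕ} (h : j < k) : gs.s j ∈ gs.H k :=
  Subgroup.subset_closure ⟨j, h, rfl⟩

theorem s_notMem {j : ℕ} (h : j < gs.t) : gs.s j ∉ gs.H j := gs.notMem j h

theorem H_top : gs.H gs.t = ⊤ := gs.gen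

@[simp] theorem p_zero : gs.p 0 = 1 := rfl

theorem p_succ (j : ℕ) : gs.p (j + 1) = gs.p j * gs.s j := rfl

theorem p_mem_H (j : ℕ) : gs.p j ∈ gs.H j := by
  induction j with
  | zero => exact one_mem _
  | succ j ih =>
    exact mul_mem (gs.H_mono (Nat.le_succ j) ih) (gs.s_mem_H (Nat.lt_succ_self j))

theorem p_succ_notMem {j : ℕ} (hj : j < gs.t) : gs.p (j + 1) ∉ gs.H j := by
  intro hmem
  apply gs.s_notMem hj
  have : (gs.p j)⁻¹ * gs.p (j + 1) ∈ gs.H j := mul_mem (inv_mem (gs.p_mem_H j)) hmem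
  rwa [p_succ, inv_mul_cancel_left] at this

theorem p_notMem_of_lt {i j : ℕ} (hij : i < j) (hj : j ≤ gs.t) : gs.p j ∉ gs.H i := by
  obtain ⟨k, rfl⟩ : ∃ k, j = k + 1 := ⟨j - 1, by omega⟩
  intro hmem
  exact gs.p_succ_notMem (by omega) (gs.H_mono (by omega) hmem)

theorem p_inj {i j : ℕ} (hi : i ≤ gs.t) (hj : j ≤ gs.t) (h : gs.p i = gs.p j) : i = j := by
  rcases lt_trichotomy i j with hlt | he | hlt
  · exact absurd (h ▸ gs.H_mono (le_refl i) (gs.p_mem_H i)) (gs.p_notMem_of_lt hlt hj)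
  · exact he
  · exact absurd (h.symm ▸ gs.H_mono (le_refl j) (gs.p_mem_H j)) (gs.p_notMem_of_lt hlt hi)

/-- First relation set: identity and the generators. -/
def E1 : Set G := insert 1 (gs.s '' {i | i < gs.t})

/-- Second relation set: the prefix products. -/
def E2 : Set G := gs.p '' {j | j ≤ gs.t}

theorem one_mem_E1 : (1 : G) ∈ gs.E1 := Set.mem_insert _ _

theorem one_mem_E2 : (1 : G) ∈ gs.E2 := ⟨0, Nat.zero_le _, rfl⟩

theorem s_mem_E1 {j : ℕ} (hj : j < gs.t) : gs.s j ∈ gs.E1 :=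
  Set.mem_insert_of_mem _ ⟨j, hj, rfl⟩

theorem p_mem_E2 {j : ℕ} (hj : j ≤ gs.t) : gs.p j ∈ gs.E2 := ⟨j, hj, rfl⟩

end GenSeq

/-- The subgroup of exact colors of a map `φ`. -/
def colorSubgroup (φ : G → G) : Subgroup G where
  carrier := {c | ∀ g, φ (g * c) = φ g * c}
  one_mem' := by simp
  mul_mem' := by
    intro a b ha hb g
    rw [← mul_assoc, hb, ha, mul_assoc]
  inv_mem' := by
    intro a ha g
    have := ha (g * a⁻¹)
    rw [inv_mul_cancel_right] at this
    rw [this, mul_inv_cancel_right]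

/-- The key rigidity theorem: a bijection compatible with the two relation sets
is a left translation. -/
theorem rigidity (gs : GenSeq G) (φ : G ≃ G)
    (h1 : ∀ g h : G, g⁻¹ * h ∈ gs.E1 → (φ g)⁻¹ * φ h ∈ gs.E1)
    (h2 : ∀ g h : G, g⁻¹ * h ∈ gs.E2 → (φ g)⁻¹ * φ h ∈ gs.E2) :
    ∀ g, φ g = φ 1 * g := by
  -- main induction: prefix products are exact colors
  have step : ∀ j, j + 1 ≤ gs.t →
      (∀ i ≤ j, ∀ g : G, φ (g * gs.p i) = φ g * gs.p i) →
      ∀ g : G, φ (g * gs.p (j + 1)) = φ g * gs.p (j + 1) := by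
      intro j hj1 ih g
      have hjt : j < gs.t := hj1
      have ihj := ih j (le_refl j)
      -- E1 condition at base g * p j
      have e1 : (φ g * gs.p j)⁻¹ * φ (g * gs.p (j + 1)) ∈ gs.E1 := by
        rw [← ihj]
        apply h1
        have : (g * gs.p j)⁻¹ * (g * gs.p (j + 1)) = gs.s j := by
          rw [gs.p_succ]; group
        rw [this]
        exact gs.s_mem_E1 hjt
      -- E2 condition at base g
      have e2 : (φ g)⁻¹ * φ (g * gs.p (j + 1)) ∈ gs.E2 := by
        apply h2
        rw [inv_mul_cancel_left]
        exact gs.p_mem_E2 hj1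
      obtain ⟨i, hi', hpi⟩ := e2
      have hi : i ≤ gs.t := hi'
      have hX : φ (g * gs.p (j + 1)) = φ g * gs.p i := by
        rw [hpi, mul_inv_cancel_left]
      -- rule out i ≤ j
      have hij : j < i := by
        by_contra hle
        push_neg at hle
        have h3 : φ (g * gs.p (j + 1)) = φ (g * gs.p i) := by
          rw [hX]; exact (ih i (by omega) g).symm
        have h4 : gs.p (j + 1) = gs.p i := mul_left_cancel (φ.injective h3)
        have := gs.p_inj hj1 hi h4
        omega
      -- analyse E1 membership
      rcases e1 with h1' | ⟨m, hm', hsm⟩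
      · -- (φ g * p j)⁻¹ * X = 1
        exfalso
        have hXj : φ g * gs.p i = φ g * gs.p j := by
          rw [← hX]
          have : φ (g * gs.p (j + 1)) = (φ g * gs.p j) * ((φ g * gs.p j)⁻¹ * φ (g * gs.p (j + 1))) := by
            group
          rw [this, h1', mul_one]
        have := gs.p_inj hi (by omega) (mul_left_cancel hXj)
        omega
      · -- (φ g * p j)⁻¹ * X = s m, i.e. p i = p j * s m
        have hm : m < gs.t := hm'
        have hpis : gs.p i = gs.p j * gs.s m := by
          have h5 : φ (g * gs.p (j + 1)) = (φ g * gs.p j) * ((φ g * gs.p j)⁻¹ * φ (g * gs.p (j + 1))) := by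
            group
          rw [← hsm, hX] at h5
          have h6 : φ g * gs.p i = φ g * (gs.p j * gs.s m) := by
            rw [h5, mul_assoc]
          exact mul_left_cancel h6
        -- m ≥ j, since otherwise p i ∈ H j while i > j
        have hmj : j ≤ m := by
          by_contra hlt
          push_neg at hlt
          have hin : gs.p i ∈ gs.H j := by
            rw [hpis]
            exact mul_mem (gs.p_mem_H j) (gs.H_mono (by omega) (gs.s_mem_H (Nat.lt_succ_self m)))
          exact gs.p_notMem_of_lt hij hi hin
        -- if m > j: derive i = m + 1 and p m = p j, contradiction
        have hmeq : m = j := by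
          by_contra hne
          have hjm : j < m := lt_of_le_of_ne hmj (Ne.symm hne)
          -- i ≤ m impossible: s m would be in H m
          have him : m < i := by
            by_contra hle
            push_neg at hle
            apply gs.s_notMem hm
            have h7 : (gs.p j)⁻¹ * gs.p i ∈ gs.H m :=
              mul_mem (inv_mem (gs.H_mono (by omega) (gs.p_mem_H j)))
                (gs.H_mono hle (gs.p_mem_H i))
            rwa [hpis, inv_mul_cancel_left] at h7
          -- i = m + 1 since p i ∈ H (m+1)
          have him1 : i = m + 1 := by
            by_contra hne2
            have h8 : gs.p i ∈ gs.H (m + 1) := by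
              rw [hpis]
              exact mul_mem (gs.H_mono (by omega) (gs.p_mem_H j)) (gs.s_mem_H (Nat.lt_succ_self m))
            exact gs.p_notMem_of_lt (by omega) hi h8
          -- then p m = p j, contradiction with j < m
          have h9 : gs.p m = gs.p j := by
            apply mul_right_cancel (b := gs.s m)
            rw [← gs.p_succ, ← him1, hpis]
          have := gs.p_inj (by omega) (by omega) h9
          omega
        -- now p i = p (j+1), so i = j+1 and we're done
        have h10 : gs.p i = gs.p (j + 1) := by rw [hpis, hmeq, gs.p_succ]
        rw [hX, gs.p_inj hi hj1 h10]
  have main : ∀ j ≤ gs.t, ∀ g : G, φ (g * gs.p j) = φ g * gs.p j := by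
    have main' : ∀ j, ∀ i ≤ j, i ≤ gs.t → ∀ g : G, φ (g * gs.p i) = φ g * gs.p i := by
      intro j
      induction j with
      | zero =>
        intro i hi _ g
        interval_cases i
        simp
      | succ j ihj =>
        intro i hi hit g
        rcases Nat.lt_succ_iff_lt_or_eq.mp (Nat.lt_succ_of_le hi) with h | rfl
        · exact ihj i (by omega) hit g
        · exact step j hit (fun i' hi' g' => ihj i' hi' (by omega) g') g
    exact fun j hj g => main' j j (le_refl j) hj g
  -- conclude: all generators are colors
  have hC : gs.H gs.t ≤ colorSubgroup φ := by
    rw [GenSeq.H]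
    apply (Subgroup.closure_le _).mpr
    rintro x ⟨j, hj, rfl⟩
    have hj' : j < gs.t := hj
    have hpj : gs.p j ∈ colorSubgroup φ := fun g => main j (le_of_lt hj') g
    have hpj1 : gs.p (j + 1) ∈ colorSubgroup φ := fun g => main (j + 1) hj' g
    have h11 : (gs.p j)⁻¹ * gs.p (j + 1) ∈ colorSubgroup φ := mul_mem (inv_mem hpj) hpj1
    rwa [gs.p_succ, inv_mul_cancel_left] at h11
  intro g
  have hg : g ∈ colorSubgroup φ := by
    rw [gs.H_top] at hC
    exact hC trivial
  have := hg 1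
  rwa [one_mul] at this

theorem subgroup_card_lt {K K' : Subgroup G} [Fintype G] (hle : K ≤ K') {a : G}
    (ha' : a ∈ K') (ha : a ∉ K) : Nat.card K < Nat.card K' := by
  have hss : (K : Set G) ⊂ (K' : Set G) := ⟨hle, fun h => ha (h ha')⟩
  have := Set.ncard_lt_ncard hss (Set.toFinite _)
  simpa only [← Nat.card_coe_set_eq, SetLike.coe_sort_coe] using this

theorem card_subgroup_le [Fintype G] (K : Subgroup G) : Nat.card K ≤ Fintype.card G := by
  have := Set.ncard_le_ncard (Set.subset_univ (K : Set G)) (Set.toFinite _)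
  rw [Set.ncard_univ, Nat.card_eq_fintype_card, ← Nat.card_coe_set_eq, SetLike.coe_sort_coe] at this
  exact this

theorem exists_genSeq (G : Type*) [Group G] [Fintype G] : Nonempty (GenSeq G) := by
  suffices aux : ∀ m (t : ℕ) (s : ℕ → G),
      (∀ j < t, s j ∉ Subgroup.closure (s '' {i | i < j})) →
      Fintype.card G ≤ m + Nat.card (Subgroup.closure (s '' {i | i < t})) →
      Nonempty (GenSeq G) by
    exact aux (Fintype.card G) 0 (fun _ => 1) (by omega) (by omega)
  intro m
  induction m with
  | zero =>
    intro t s hnot hcard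
    refine ⟨⟨t, s, hnot, ?_⟩⟩
    have h1 : Nat.card (Subgroup.closure (s '' {i | i < t})) = Nat.card G := by
      have h2 := card_subgroup_le (Subgroup.closure (s '' {i | i < t}))
      have h3 : Nat.card G = Fintype.card G := Nat.card_eq_fintype_card
      omega
    exact Subgroup.eq_top_of_card_eq _ h1
  | succ m ih =>
    intro t s hnot hcard
    by_cases htop : Subgroup.closure (s '' {i | i < t}) = ⊤
    · exact ⟨⟨t, s, hnot, htop⟩⟩
    · have hex : ∃ a, a ∉ Subgroup.closure (s '' {i | i < t}) := by
        by_contra hc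
        push_neg at hc
        exact htop (Subgroup.eq_top_iff' _ |>.mpr hc)
      obtain ⟨a, ha⟩ := hex
      set s' : ℕ → G := Function.update s t a with hs'
      have himg : ∀ j ≤ t, s' '' {i | i < j} = s '' {i | i < j} := by
        intro j hj
        apply Set.image_congr
        intro i hi
        have hij : i < j := hi
        exact Function.update_of_ne (by omega : i ≠ t) a s
      have hnot' : ∀ j < t + 1, s' j ∉ Subgroup.closure (s' '' {i | i < j}) := by
        intro j hj
        rcases Nat.lt_succ_iff_lt_or_eq.mp hj with h | rfl
        · rw [himg j (le_of_lt h)]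
          have : s' j = s j := Function.update_of_ne (by omega) a s
          rw [this]
          exact hnot j h
        · rw [himg j (le_refl j)]
          have : s' j = a := Function.update_self j a s
          rw [this]
          exact ha
      apply ih (t + 1) s' hnot'
      have hlt : Nat.card (Subgroup.closure (s '' {i | i < t}))
          < Nat.card (Subgroup.closure (s' '' {i | i < t + 1})) := by
        apply subgroup_card_lt (a := a)
        · rw [← himg t (le_refl t)]
          exact Subgroup.closure_mono (Set.image_mono (fun x hx => by
            simp only [Set.mem_setOf_eq] at *; omega))
        · apply Subgroup.subset_closure
          exact ⟨t, by simp, Function.update_self t a s⟩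
        · exact ha
      omega




section Poset

variable {G : Type*} [Group G]

/-- Relation sets between the four levels. -/
def Rel (gs : GenSeq G) : ℕ → ℕ → Set G
  | 0, 1 => {1}
  | 1, 2 => {1}
  | 2, 3 => {1}
  | 0, 2 => gs.E1
  | 1, 3 => gs.E2
  | 0, 3 => gs.E1 ∪ gs.E2
  | _, _ => ∅

variable (gs : GenSeq G)

theorem one_mem_Rel_succ {k : ℕ} (hk : k + 1 < 4) : (1 : G) ∈ Rel gs k (k + 1) := by
  have hk3 : k < 3 := by omega
  interval_cases k <;> simp [Rel]

theorem Rel_mul {i j k : ℕ} (hij : i < j) (hjk : j < k) (hk : k < 4) :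
    ∀ a b : G, a ∈ Rel gs i j → b ∈ Rel gs j k → a * b ∈ Rel gs i k := by
  intro a b ha hb
  interval_cases k <;> interval_cases j <;> interval_cases i <;>
    simp_all [Rel] <;>
    first
      | exact Or.inl gs.one_mem_E1
      | exact Or.inr gs.one_mem_E2
      | exact gs.one_mem_E1
      | exact gs.one_mem_E2

/-- The carrier of the poset. -/
def PT {G : Type*} [Group G] (_gs : GenSeq G) : Type _ := G × Fin 4

namespace PT

variable {gs}

def mk (g : G) (i : Fin 4) : PT gs := (g, i)
def g (x : PT gs) : G := x.1
def l (x : PT gs) : Fin 4 := x.2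

@[simp] theorem g_mk (a : G) (i : Fin 4) : g (gs := gs) (mk a i) = a := rfl
@[simp] theorem l_mk (a : G) (i : Fin 4) : l (gs := gs) (mk a i) = i := rfl

theorem ext {x y : PT gs} (h1 : g x = g y) (h2 : l x = l y) : x = y :=
  Prod.ext h1 h2

/-- The order. -/
def Le (x y : PT gs) : Prop :=
  (l x = l y ∧ g x = g y) ∨ ((l x).val < (l y).val ∧ (g x)⁻¹ * g y ∈ Rel gs (l x).val (l y).val)

instance instPartialOrder : PartialOrder (PT gs) where
  le := Le
  le_refl x := Or.inl ⟨rfl, rfl⟩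
  le_trans x y z hxy hyz := by
    rcases hxy with ⟨h1, h2⟩ | ⟨h1, h2⟩
    · rcases hyz with ⟨h3, h4⟩ | ⟨h3, h4⟩
      · exact Or.inl ⟨h1.trans h3, h2.trans h4⟩
      · refine Or.inr ⟨by rw [h1]; exact h3, ?_⟩
        rw [h1, h2]
        exact h4
    · rcases hyz with ⟨h3, h4⟩ | ⟨h3, h4⟩
      · refine Or.inr ⟨by rw [← h3]; exact h1, ?_⟩
        rw [← h3, ← h4]
        exact h2
      · refine Or.inr ⟨lt_trans h1 h3, ?_⟩
        have := Rel_mul gs h1 h3 (l z).isLt _ _ h2 h4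
        rwa [mul_assoc, mul_inv_cancel_left] at this
  le_antisymm x y hxy hyx := by
    rcases hxy with ⟨h1, h2⟩ | ⟨h1, h2⟩
    · exact ext h2 h1
    · rcases hyx with ⟨h3, h4⟩ | ⟨h3, h4⟩
      · exact absurd (h3 ▸ h1) (lt_irrefl _)
      · exact absurd (lt_trans h1 h3) (lt_irrefl _)

theorem le_def {x y : PT gs} : x ≤ y ↔
    (l x = l y ∧ g x = g y) ∨
    ((l x).val < (l y).val ∧ (g x)⁻¹ * g y ∈ Rel gs (l x).val (l y).val) := Iff.rfl

theorem lt_lev {x y : PT gs} (h : x < y) : (l x).val < (l y).val := by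
  rcases (le_def.mp h.le) with ⟨h1, h2⟩ | ⟨h1, h2⟩
  · exact absurd (ext h2 h1) h.ne
  · exact h1

theorem exists_lt_below {x : PT gs} {k : ℕ} (h : (l x).val = k + 1) :
    ∃ y : PT gs, y < x ∧ (l y).val = k := by
  refine ⟨mk (g x) ⟨k, by omega⟩, ?_, rfl⟩
  have hle : mk (g x) ⟨k, by omega⟩ ≤ x := by
    rw [le_def]
    refine Or.inr ⟨by simp [h], ?_⟩
    simpa [h] using (one_mem_Rel_succ gs (h ▸ (l x).isLt) : (1:G) ∈ Rel gs k (k+1))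
  refine lt_of_le_of_ne hle ?_
  intro he
  have := congrArg (fun z => (l z).val) he
  simp [h] at this

/-- Order isomorphisms do not decrease levels. -/
theorem layer_ge (σ : PT gs ≃o PT gs) :
    ∀ (k : ℕ) (x : PT gs), (l x).val = k → k ≤ (l (σ x)).val := by
  intro k
  induction k with
  | zero => intro x _; omega
  | succ k ih =>
    intro x hx
    obtain ⟨y, hyx, hy⟩ := exists_lt_below hx
    have h1 : σ y < σ x := by
      rw [OrderIso.lt_iff_lt]
      exact hyx
    have h2 := lt_lev h1
    have h3 := ih y hy
    omega

/-- Order isomorphisms preserve levels. -/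
theorem layer_eq (σ : PT gs ≃o PT gs) (x : PT gs) : l (σ x) = l x := by
  have h1 := layer_ge σ (l x).val x rfl
  have h2 := layer_ge σ.symm (l (σ x)).val (σ x) rfl
  rw [OrderIso.symm_apply_apply] at h2
  exact Fin.ext (by omega)

/-- The bijection of `G` induced on the levels. -/
def phi (σ : PT gs ≃o PT gs) : G ≃ G where
  toFun a := g (σ (mk a 0))
  invFun a := g (σ.symm (mk a 0))
  left_inv a := by
    have h0 : l (σ (mk a 0)) = 0 := by rw [layer_eq]; rfl
    have h1 : mk (g (σ (mk a 0))) 0 = σ (mk a 0) := ext rfl h0.symm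
    show g (σ.symm (mk (g (σ (mk a 0))) 0)) = a
    rw [h1, OrderIso.symm_apply_apply]
    rfl
  right_inv a := by
    have h0 : l (σ.symm (mk a 0)) = 0 := by
      have h2 := layer_eq σ (σ.symm (mk a 0))
      rw [OrderIso.apply_symm_apply] at h2
      rw [← h2]; rfl
    have h1 : mk (g (σ.symm (mk a 0))) 0 = σ.symm (mk a 0) := ext rfl h0.symm
    show g (σ (mk (g (σ.symm (mk a 0))) 0)) = a
    rw [h1, OrderIso.apply_symm_apply]
    rfl

/-- On every level, `σ` keeps the level. -/
theorem apply_eq (σ : PT gs ≃o PT gs) (a : G) (i : Fin 4) :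
    σ (mk a i) = mk (g (σ (mk a i))) i := by
  refine ext rfl ?_
  rw [layer_eq]; rfl

theorem step_eq (σ : PT gs ≃o PT gs) (a : G) (i j : Fin 4) (hij : (j : ℕ) = (i : ℕ) + 1) :
    g (σ (mk a i)) = g (σ (mk a j)) := by
  have hle : (mk a i : PT gs) ≤ mk a j := by
    rw [le_def]
    refine Or.inr ⟨by simp only [l_mk]; omega, ?_⟩
    simpa [hij] using (one_mem_Rel_succ gs (hij ▸ j.isLt) : (1:G) ∈ Rel gs i.val (i.val+1))
  have h2 : σ (mk a i) ≤ σ (mk a j) := σ.monotone hle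
  rw [apply_eq σ a i, apply_eq σ a j, le_def] at h2
  rcases h2 with ⟨h3, _⟩ | ⟨_, h4⟩
  · exfalso
    simp only [l_mk] at h3
    have := congrArg Fin.val h3
    omega
  · simp only [l_mk, g_mk, hij] at h4
    have h5 : (g (σ (mk a i)))⁻¹ * g (σ (mk a j)) ∈ ({1} : Set G) := by
      have hrel : Rel gs (i.val) (i.val + 1) = ({1} : Set G) := by
        have : i.val < 3 := by omega
        interval_cases hv : i.val <;> simp [Rel]
      rwa [hrel] at h4
    have h6 : (g (σ (mk a i)))⁻¹ * g (σ (mk a j)) = 1 := h5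
    have := mul_eq_one_iff_inv_eq.mp h6
    rw [← this, inv_inv]

theorem phi_eq_on_level (σ : PT gs ≃o PT gs) (a : G) (i : Fin 4) :
    g (σ (mk a i)) = phi σ a := by
  have h01 := step_eq σ a 0 1 rfl
  have h12 := step_eq σ a 1 2 rfl
  have h23 := step_eq σ a 2 3 rfl
  have : phi σ a = g (σ (mk a 0)) := rfl
  fin_cases i <;> simp_all

theorem cond_E1 (σ : PT gs ≃o PT gs) :
    ∀ a b : G, a⁻¹ * b ∈ gs.E1 → (phi σ a)⁻¹ * phi σ b ∈ gs.E1 := by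
  intro a b hab
  have hle : (mk a 0 : PT gs) ≤ mk b 2 := by
    rw [le_def]
    exact Or.inr ⟨by simp, by simpa [Rel] using hab⟩
  have h2 := σ.monotone hle
  rw [apply_eq σ a 0, apply_eq σ b 2, phi_eq_on_level, phi_eq_on_level, le_def] at h2
  rcases h2 with ⟨h3, _⟩ | ⟨_, h4⟩
  · exfalso
    simp only [l_mk] at h3
    exact absurd (congrArg Fin.val h3) (by decide)
  · simpa [Rel] using h4

theorem cond_E2 (σ : PT gs ≃o PT gs) :
    ∀ a b : G, a⁻¹ * b ∈ gs.E2 → (phi σ a)⁻¹ * phi σ b ∈ gs.E2 := by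
  intro a b hab
  have hle : (mk a 1 : PT gs) ≤ mk b 3 := by
    rw [le_def]
    exact Or.inr ⟨by simp only [l_mk]; decide, by simpa [Rel] using hab⟩
  have h2 := σ.monotone hle
  rw [apply_eq σ a 1, apply_eq σ b 3, phi_eq_on_level, phi_eq_on_level, le_def] at h2
  rcases h2 with ⟨h3, _⟩ | ⟨_, h4⟩
  · exfalso
    simp only [l_mk] at h3
    exact absurd (congrArg Fin.val h3) (by decide)
  · simpa [Rel] using h4

theorem classification (σ : PT gs ≃o PT gs) (x : PT gs) :
    σ x = mk (phi σ 1 * g x) (l x) := by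
  have hphi := rigidity gs (phi σ) (cond_E1 σ) (cond_E2 σ)
  have hx : x = mk (g x) (l x) := rfl
  calc σ x = σ (mk (g x) (l x)) := by rw [← hx]
    _ = mk (g (σ (mk (g x) (l x)))) (l x) := apply_eq σ _ _
    _ = mk (phi σ (g x)) (l x) := by rw [phi_eq_on_level]
    _ = mk (phi σ 1 * g x) (l x) := by rw [hphi]

/-- Left translations as order automorphisms. -/
def transIso (a : G) : PT gs ≃o PT gs where
  toFun x := mk (a * g x) (l x)
  invFun x := mk (a⁻¹ * g x) (l x)
  left_inv x := by apply ext <;> simp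
  right_inv x := by apply ext <;> simp
  map_rel_iff' := by
    intro x y
    show (mk (a * g x) (l x) : PT gs) ≤ mk (a * g y) (l y) ↔ x ≤ y
    rw [le_def, le_def]
    simp [mul_assoc]

/-- The automorphism group of the poset is `G`. -/
def autMulEquiv : (PT gs ≃o PT gs) ≃* G where
  toFun σ := phi σ 1
  invFun a := transIso a
  left_inv σ := by
    apply RelIso.ext
    intro x
    rw [classification σ x]
    rfl
  right_inv a := by
    show phi (transIso a) 1 = a
    show g (transIso (gs := gs) a (mk 1 0)) = a
    simp [transIso]
  map_mul' σ τ := by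
    show g ((σ * τ) (mk 1 0)) = phi σ 1 * phi τ 1
    have h : (σ * τ) (mk (1:G) 0) = σ (τ (mk (1:G) 0)) := rfl
    rw [h, classification τ, classification σ]
    simp

instance instFintype [Fintype G] : Fintype (PT gs) :=
  inferInstanceAs (Fintype (G × Fin 4))

theorem card_eq [Fintype G] : Fintype.card (PT gs) = 4 * Fintype.card G := by
  have : Fintype.card (PT gs) = Fintype.card (G × Fin 4) := rfl
  rw [this, Fintype.card_prod, Fintype.card_fin, Nat.mul_comm]

end PT

end Poset

/-- An instance-free copy of `Fin n`. -/
def Carrier (n : ℕ) : Type := Fin n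

end AutPoset4

/-- For every finite group `G` there exists a finite partially ordered set `P` with
exactly `4 * |G|` elements whose automorphism group (the group of order isomorphisms
`P ≃o P` under composition) is isomorphic to `G`. -/
theorem exists_poset_card_four_mul_aut_iso (G : Type*) [Group G] [Fintype G] :
    ∃ (P : Type) (_ : PartialOrder P) (_ : Fintype P),
      Fintype.card P = 4 * Fintype.card G ∧ Nonempty ((P ≃o P) ≃* G) := by
  classical
  -- transport `G` to a group in `Type 0`
  set n := Fintype.card G with hn
  have e : AutPoset4.Carrier n ≃ G := ((Fintype.equivFin G).symm : Fin n ≃ G)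
  letI : Group (AutPoset4.Carrier n) := e.group
  letI : Fintype (AutPoset4.Carrier n) := inferInstanceAs (Fintype (Fin n))
  have eMul : AutPoset4.Carrier n ≃* G :=
    { toEquiv := e,
      map_mul' := fun x y => by
        show e (e.symm (e x * e y)) = e x * e y
        exact e.apply_symm_apply _ }
  obtain ⟨gs⟩ := AutPoset4.exists_genSeq (AutPoset4.Carrier n)
  refine ⟨AutPoset4.PT gs, inferInstance, inferInstance, ?_, ?_⟩
  · rw [AutPoset4.PT.card_eq]
    have hcard : Fintype.card (AutPoset4.Carrier n) = n :=
      (Fintype.card_fin n : Fintype.card (Fin n) = n)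
    rw [hcard]
  · exact ⟨(AutPoset4.PT.autMulEquiv (gs := gs)).trans eMul⟩
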